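/- Let X be a zero-dimensional compact Hausdorff space and let h ∈ H(X). Then (1) the collection {⟨𝒱, Hit(𝒱,h)⟩ : 𝒱 a partition of X into clopen sets} is a local basis at h in H(X), i.e., each such set is an open neighborhood of h and every open set containing h contains one of them; and (2) if 𝒱 and 𝒲 are both partitions of X into clopen sets and 𝒲 refines 𝒱 (every member of 𝒲 is contained in a member of 𝒱), then ⟨𝒲, Hit(𝒲,h)⟩ ⊆ ⟨𝒱, Hit(𝒱,h)⟩. -/

import Mathlib

open Set TopologicalSpace

noncomputable section

/-- The compact-open topology on the group `H(X)` of self-homeomorphisms of `X`,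
generated by the sets `V(K,U) = {h : h[K] ⊆ U}` for `K` compact and `U` open. -/
instance homeoCO {X : Type*} [TopologicalSpace X] : TopologicalSpace (X ≃ₜ X) :=
  TopologicalSpace.generateFrom
    {S : Set (X ≃ₜ X) | ∃ K U : Set X, IsCompact K ∧ IsOpen U ∧
      S = {h : X ≃ₜ X | ∀ x ∈ K, h x ∈ U}}

/-- `𝒱` is a partition of `X` into (nonempty) clopen sets. -/
def IsClopenPartition {X : Type*} [TopologicalSpace X] (𝒱 : Set (Set X)) : Prop :=
  (∀ A ∈ 𝒱, IsClopen A ∧ A.Nonempty) ∧ 𝒱.Pairwise Disjoint ∧ ⋃₀ 𝒱 = univ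

/-- The set `⟨𝒱, Hit(𝒱,h)⟩`: all `g ∈ H(X)` whose hitting digraph on `𝒱` coincides
with that of `h` (where `A → B` iff the image of `A` meets `B`). -/
def hitNbhd {X : Type*} [TopologicalSpace X] (h : X ≃ₜ X) (𝒱 : Set (Set X)) :
    Set (X ≃ₜ X) :=
  {g : X ≃ₜ X | ∀ A ∈ 𝒱, ∀ B ∈ 𝒱,
    (((⇑g '' A) ∩ B).Nonempty ↔ ((⇑h '' A) ∩ B).Nonempty)}

section Aux

set_option linter.unusedSectionVars false

variable {X : Type*} [TopologicalSpace X]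

lemma clopenPartition_finite [CompactSpace X] {𝒱 : Set (Set X)}
    (h𝒱 : IsClopenPartition 𝒱) : 𝒱.Finite := by
  obtain ⟨hmem, hdisj, hcov⟩ := h𝒱
  obtain ⟨t, hts, htfin, hcover⟩ := IsCompact.elim_finite_subcover_image
    (isCompact_univ (X := X)) (fun A hA => (hmem A hA).1.2)
    (by rw [← sUnion_eq_biUnion, hcov])
  refine htfin.subset fun A hA => ?_
  obtain ⟨x, hx⟩ := (hmem A hA).2
  obtain ⟨B, hB, hxB⟩ := mem_iUnion₂.1 (hcover (mem_univ x))
  rcases eq_or_ne A B with rfl | hne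
  · exact hB
  · exact absurd (hdisj hA (hts hB) hne) (fun hd => hd.ne_of_mem hx hxB rfl)

lemma isOpen_mapsTo {K U : Set X} (hK : IsCompact K) (hU : IsOpen U) :
    IsOpen {g : X ≃ₜ X | ∀ x ∈ K, g x ∈ U} :=
  isOpen_generateFrom_of_mem ⟨K, U, hK, hU, rfl⟩

lemma isOpen_hits {A B : Set X} (hB : IsOpen B) :
    IsOpen {g : X ≃ₜ X | ((⇑g '' A) ∩ B).Nonempty} := by
  have heq : {g : X ≃ₜ X | ((⇑g '' A) ∩ B).Nonempty}
      = ⋃ x ∈ A, {g : X ≃ₜ X | ∀ y ∈ ({x} : Set X), g y ∈ B} := by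
    ext g
    simp only [mem_setOf_eq, mem_iUnion, Set.Nonempty, mem_inter_iff, mem_image,
      mem_singleton_iff]
    constructor
    · rintro ⟨y, ⟨x, hx, rfl⟩, hyB⟩; exact ⟨x, hx, fun y hy => hy ▸ hyB⟩
    · rintro ⟨x, hx, hB'⟩; exact ⟨g x, ⟨x, hx, rfl⟩, hB' x rfl⟩
  rw [heq]
  exact isOpen_biUnion fun x _ => isOpen_mapsTo isCompact_singleton hB

lemma isOpen_misses {A B : Set X} (hA : IsCompact A) (hB : IsClosed B) :
    IsOpen {g : X ≃ₜ X | ¬((⇑g '' A) ∩ B).Nonempty} := by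
  have heq : {g : X ≃ₜ X | ¬((⇑g '' A) ∩ B).Nonempty}
      = {g : X ≃ₜ X | ∀ x ∈ A, g x ∈ Bᶜ} := by
    ext g
    simp only [mem_setOf_eq, not_nonempty_iff_eq_empty, eq_empty_iff_forall_notMem,
      mem_inter_iff, mem_image, mem_compl_iff]
    constructor
    · intro H x hx hgx; exact H (g x) ⟨⟨x, hx, rfl⟩, hgx⟩
    · rintro H y ⟨⟨x, hx, rfl⟩, hyB⟩; exact H x hx hyB
  rw [heq]
  exact isOpen_mapsTo hA hB.isOpen_compl

lemma generateOpen_finite_subbasis {α : Type*} {g : Set (Set α)} {U : Set α}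
    (hU : TopologicalSpace.GenerateOpen g U) :
    ∀ a ∈ U, ∃ F : Set (Set α), F.Finite ∧ F ⊆ g ∧ (∀ S ∈ F, a ∈ S) ∧ ⋂₀ F ⊆ U := by
  induction hU with
  | basic S hS =>
      exact fun a ha => ⟨{S}, finite_singleton S, singleton_subset_iff.2 hS,
        by simpa using ha, by simp⟩
  | univ => exact fun a _ => ⟨∅, finite_empty, empty_subset _, by simp, by simp⟩
  | inter U V hU hV ihU ihV =>
      intro a ha
      obtain ⟨F1, f1, s1, m1, i1⟩ := ihU a ha.1
      obtain ⟨F2, f2, s2, m2, i2⟩ := ihV a ha.2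
      refine ⟨F1 ∪ F2, f1.union f2, union_subset s1 s2, ?_, ?_⟩
      · rintro S (hS | hS); exacts [m1 S hS, m2 S hS]
      · rw [sInter_union]; exact fun x hx => ⟨i1 hx.1, i2 hx.2⟩
  | sUnion S hS ih =>
      rintro a ⟨t, ht, hat⟩
      obtain ⟨F, f, s, m, i⟩ := ih t ht a hat
      exact ⟨F, f, s, m, fun x hx => ⟨t, ht, i hx⟩⟩

lemma exists_clopen_between [CompactSpace X] [T2Space X] [TotallyDisconnectedSpace X]
    {K U : Set X} (hK : IsCompact K) (hU : IsOpen U) (hKU : K ⊆ U) :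
    ∃ C : Set X, IsClopen C ∧ K ⊆ C ∧ C ⊆ U := by
  choose V hV hxV hVU using fun x : K => compact_exists_isClopen_in_isOpen hU (hKU x.2)
  obtain ⟨t, ht⟩ := hK.elim_finite_subcover V (fun x => (hV x).2)
    (fun x hx => mem_iUnion.2 ⟨⟨x, hx⟩, hxV ⟨x, hx⟩⟩)
  refine ⟨⋃ x ∈ t, V x, isClopen_biUnion_finset fun x _ => hV x, ht, ?_⟩
  exact iUnion₂_subset fun x _ => hVU x

variable {ι : Type*} [Finite ι] (C : ι → Set X)

open scoped Classical in
/-- The atom of the family `C` determined by the sign pattern `σ`. -/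
def atomOf (σ : ι → Prop) : Set X := ⋂ i, if σ i then C i else (C i)ᶜ

/-- The nonempty atoms of the family `C`. -/
def atoms : Set (Set X) := {A | A.Nonempty ∧ ∃ σ : ι → Prop, A = atomOf C σ}

lemma mem_atomOf_self (x : X) : x ∈ atomOf C (fun i => x ∈ C i) := by
  classical
  refine mem_iInter.2 fun i => ?_
  by_cases hx : x ∈ C i <;> simp [atomOf, hx]

lemma atomOf_subset {σ : ι → Prop} {i : ι} (hi : σ i) : atomOf C σ ⊆ C i := by
  classical
  refine (iInter_subset _ i).trans ?_
  simp [hi]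

lemma atomOf_subset_compl {σ : ι → Prop} {i : ι} (hi : ¬ σ i) : atomOf C σ ⊆ (C i)ᶜ := by
  classical
  refine (iInter_subset _ i).trans ?_
  simp [hi]

lemma atomOf_eq_of_mem {σ τ : ι → Prop} {x : X} (hσ : x ∈ atomOf C σ)
    (hτ : x ∈ atomOf C τ) : atomOf C σ = atomOf C τ := by
  classical
  have key : ∀ i, σ i ↔ τ i := by
    intro i
    by_cases h1 : σ i <;> by_cases h2 : τ i
    · exact iff_of_true h1 h2
    · exact absurd (atomOf_subset C h1 hσ) (atomOf_subset_compl C h2 hτ)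
    · exact absurd (atomOf_subset C h2 hτ) (atomOf_subset_compl C h1 hσ)
    · exact iff_of_false h1 h2
  have : σ = τ := funext fun i => propext (key i)
  rw [this]

lemma isClopen_atomOf (hC : ∀ i, IsClopen (C i)) (σ : ι → Prop) :
    IsClopen (atomOf C σ) := by
  classical
  refine ⟨isClosed_iInter fun i => ?_, isOpen_iInter_of_finite fun i => ?_⟩
  · split_ifs
    · exact (hC i).1
    · exact (hC i).compl.1
  · split_ifs
    · exact (hC i).2
    · exact (hC i).compl.2

lemma isClopenPartition_atoms (hC : ∀ i, IsClopen (C i)) :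
    IsClopenPartition (atoms C) := by
  refine ⟨?_, ?_, ?_⟩
  · rintro A ⟨hne, σ, rfl⟩
    exact ⟨isClopen_atomOf C hC σ, hne⟩
  · rintro A ⟨hA, σ, rfl⟩ B ⟨hB, τ, rfl⟩ hne
    rw [disjoint_left]
    intro x hx hx'
    exact hne (atomOf_eq_of_mem C hx hx')
  · refine eq_univ_of_forall fun x => ?_
    exact ⟨atomOf C (fun i => x ∈ C i), ⟨⟨x, mem_atomOf_self C x⟩, _, rfl⟩,
      mem_atomOf_self C x⟩

lemma refine_edge {𝒱 𝒲 : Set (Set X)}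
    (hVd : 𝒱.Pairwise Disjoint) (hWcov : ⋃₀ 𝒲 = univ)
    (href : ∀ W ∈ 𝒲, ∃ V ∈ 𝒱, W ⊆ V) (f : X ≃ₜ X) {A B : Set X}
    (hA : A ∈ 𝒱) (hB : B ∈ 𝒱) (hedge : ((⇑f '' A) ∩ B).Nonempty) :
    ∃ W ∈ 𝒲, ∃ W' ∈ 𝒲, W ⊆ A ∧ W' ⊆ B ∧ ((⇑f '' W) ∩ W').Nonempty := by
  obtain ⟨y, ⟨x, hxA, rfl⟩, hyB⟩ := hedge
  obtain ⟨W, hW, hxW⟩ : ∃ W ∈ 𝒲, x ∈ W := by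
    have : x ∈ ⋃₀ 𝒲 := hWcov ▸ mem_univ x
    exact this
  obtain ⟨W', hW', hfxW'⟩ : ∃ W' ∈ 𝒲, f x ∈ W' := by
    have : f x ∈ ⋃₀ 𝒲 := hWcov ▸ mem_univ (f x)
    exact this
  obtain ⟨V, hV, hWV⟩ := href W hW
  obtain ⟨V', hV', hWV'⟩ := href W' hW'
  have hVA : V = A := by
    by_contra hne
    exact absurd rfl ((hVd hV hA hne).ne_of_mem (hWV hxW) hxA)
  have hVB : V' = B := by
    by_contra hne
    exact absurd rfl ((hVd hV' hB hne).ne_of_mem (hWV' hfxW') hyB)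
  exact ⟨W, hW, W', hW', hVA ▸ hWV, hVB ▸ hWV', ⟨f x, ⟨x, hxW, rfl⟩, hfxW'⟩⟩

lemma edge_mono {f : X ≃ₜ X} {A B W W' : Set X} (h1 : W ⊆ A) (h2 : W' ⊆ B)
    (h3 : ((⇑f '' W) ∩ W').Nonempty) : ((⇑f '' A) ∩ B).Nonempty := by
  obtain ⟨y, hy1, hy2⟩ := h3
  exact ⟨y, image_mono h1 hy1, h2 hy2⟩

end Aux

/-- For a zero-dimensional compact Hausdorff space `X` and `h ∈ H(X)`:
(1) the sets `⟨𝒱, Hit(𝒱,h)⟩`, for `𝒱` a partition of `X` into clopen sets, form a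
local basis at `h` in `H(X)`; (2) if `𝒲` refines `𝒱` then
`⟨𝒲, Hit(𝒲,h)⟩ ⊆ ⟨𝒱, Hit(𝒱,h)⟩`. -/
theorem stmt_3 (X : Type*) [TopologicalSpace X] [CompactSpace X] [T2Space X]
    [TotallyDisconnectedSpace X] (h : X ≃ₜ X) :
    ((∀ 𝒱 : Set (Set X), IsClopenPartition 𝒱 →
        h ∈ hitNbhd h 𝒱 ∧ IsOpen (hitNbhd h 𝒱)) ∧
      (∀ U : Set (X ≃ₜ X), IsOpen U → h ∈ U →
        ∃ 𝒱 : Set (Set X), IsClopenPartition 𝒱 ∧ hitNbhd h 𝒱 ⊆ U)) ∧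
    (∀ 𝒱 𝒲 : Set (Set X), IsClopenPartition 𝒱 → IsClopenPartition 𝒲 →
      (∀ W ∈ 𝒲, ∃ V ∈ 𝒱, W ⊆ V) → hitNbhd h 𝒲 ⊆ hitNbhd h 𝒱) := by
  refine ⟨⟨?_, ?_⟩, ?_⟩
  · -- each hitNbhd is an open neighborhood of h
    intro 𝒱 h𝒱
    refine ⟨fun A _ B _ => Iff.rfl, ?_⟩
    have hfin := clopenPartition_finite h𝒱
    have heq : hitNbhd h 𝒱 = ⋂ A ∈ 𝒱, ⋂ B ∈ 𝒱,
        {g : X ≃ₜ X | (((⇑g '' A) ∩ B).Nonempty ↔ ((⇑h '' A) ∩ B).Nonempty)} := by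
      ext g
      simp only [hitNbhd, mem_setOf_eq, mem_iInter]
    rw [heq]
    refine hfin.isOpen_biInter fun A hA => hfin.isOpen_biInter fun B hB => ?_
    by_cases hE : ((⇑h '' A) ∩ B).Nonempty
    · have : {g : X ≃ₜ X | (((⇑g '' A) ∩ B).Nonempty ↔ ((⇑h '' A) ∩ B).Nonempty)}
          = {g : X ≃ₜ X | ((⇑g '' A) ∩ B).Nonempty} := by
        ext g; simp [hE]
      rw [this]
      exact isOpen_hits (h𝒱.1 B hB).1.2
    · have : {g : X ≃ₜ X | (((⇑g '' A) ∩ B).Nonempty ↔ ((⇑h '' A) ∩ B).Nonempty)}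
          = {g : X ≃ₜ X | ¬((⇑g '' A) ∩ B).Nonempty} := by
        ext g; simp [hE]
      rw [this]
      exact isOpen_misses (h𝒱.1 A hA).1.1.isCompact (h𝒱.1 B hB).1.1
  · -- the hitNbhds form a local basis at h
    intro U hU hhU
    have hgen : TopologicalSpace.GenerateOpen
        {S : Set (X ≃ₜ X) | ∃ K U : Set X, IsCompact K ∧ IsOpen U ∧
          S = {h : X ≃ₜ X | ∀ x ∈ K, h x ∈ U}} U := hU
    obtain ⟨F, hFfin, hFsub, hFmem, hFint⟩ := generateOpen_finite_subbasis hgen h hhU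
    have hKU : ∀ S : F, ∃ K V : Set X, IsCompact K ∧ IsOpen V ∧
        (S : Set (X ≃ₜ X)) = {g : X ≃ₜ X | ∀ x ∈ K, g x ∈ V} := fun S => hFsub S.2
    choose K V hK hV hSpec using hKU
    have h1 : ∀ S : F, K S ⊆ ⇑h ⁻¹' V S := by
      intro S x hx
      have hm := hFmem S S.2
      rw [hSpec S] at hm
      exact hm x hx
    have h2 : ∀ S : F, ∃ C : Set X, IsClopen C ∧ K S ⊆ C ∧ C ⊆ ⇑h ⁻¹' V S :=
      fun S => exists_clopen_between (hK S) ((hV S).preimage h.continuous) (h1 S)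
    choose C hCclo hKC hCV using h2
    have h3 : ∀ S : F, ∃ E : Set X, IsClopen E ∧ ⇑h '' C S ⊆ E ∧ E ⊆ V S := fun S =>
      exists_clopen_between (((hCclo S).1.isCompact).image h.continuous) (hV S)
        (image_subset_iff.2 (hCV S))
    choose E hEclo hCE hEV using h3
    haveI : Finite F := hFfin
    set Cl : (F × Bool) → Set X := fun p => if p.2 then C p.1 else E p.1 with hCl
    have hClclo : ∀ p : F × Bool, IsClopen (Cl p) := by
      rintro ⟨S, b⟩
      cases b
      · exact hEclo S
      · exact hCclo S
    refine ⟨atoms Cl, isClopenPartition_atoms Cl hClclo, ?_⟩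
    intro g hg
    apply hFint
    intro S hS
    show g ∈ ((⟨S, hS⟩ : F) : Set (X ≃ₜ X))
    rw [hSpec ⟨S, hS⟩]
    intro x hx
    set σ : F × Bool → Prop := fun i => x ∈ Cl i with hσ
    have hxA : x ∈ atomOf Cl σ := mem_atomOf_self Cl x
    have hAmem : atomOf Cl σ ∈ atoms Cl := ⟨⟨x, hxA⟩, σ, rfl⟩
    set τ : F × Bool → Prop := fun i => g x ∈ Cl i with hτdef
    have hgxB : g x ∈ atomOf Cl τ := mem_atomOf_self Cl (g x)
    have hBmem : atomOf Cl τ ∈ atoms Cl := ⟨⟨g x, hgxB⟩, τ, rfl⟩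
    have hgEdge : ((⇑g '' atomOf Cl σ) ∩ atomOf Cl τ).Nonempty :=
      ⟨g x, ⟨x, hxA, rfl⟩, hgxB⟩
    obtain ⟨y, ⟨a, haA, rfl⟩, hyB⟩ := (hg _ hAmem _ hBmem).1 hgEdge
    have hAC : atomOf Cl σ ⊆ C ⟨S, hS⟩ := by
      have hσS : σ (⟨S, hS⟩, true) := by
        show x ∈ Cl (⟨S, hS⟩, true)
        simpa [hCl] using hKC ⟨S, hS⟩ hx
      simpa [hCl] using atomOf_subset Cl hσS
    have hyE : h a ∈ E ⟨S, hS⟩ := hCE ⟨S, hS⟩ ⟨a, hAC haA, rfl⟩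
    by_cases hτS : τ (⟨S, hS⟩, false)
    · have : g x ∈ E ⟨S, hS⟩ := by simpa [hCl, hτdef] using hτS
      exact hEV ⟨S, hS⟩ this
    · exfalso
      have hBcompl : atomOf Cl τ ⊆ (Cl (⟨S, hS⟩, false))ᶜ := atomOf_subset_compl Cl hτS
      exact hBcompl hyB (by simpa [hCl] using hyE)
  · -- refinement
    rintro 𝒱 𝒲 ⟨hV1, hV2, hV3⟩ ⟨hW1, hW2, hW3⟩ href g hg A hA B hB
    constructor
    · intro hedge
      obtain ⟨W, hW, W', hW', hWA, hW'B, hWedge⟩ :=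
        refine_edge hV2 hW3 href g hA hB hedge
      exact edge_mono hWA hW'B ((hg W hW W' hW').1 hWedge)
    · intro hedge
      obtain ⟨W, hW, W', hW', hWA, hW'B, hWedge⟩ :=
        refine_edge hV2 hW3 href h hA hB hedge
      exact edge_mono hWA hW'B ((hg W hW W' hW').2 hWedge)
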